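/- Let d ≥ 1, let ϱ ∈ M_d(ℂ) be a positive semidefinite Hermitian matrix with support projection p and Moore–Penrose pseudoinverse ϱ⁺, and let (ϱ_m) be a sequence of positive definite Hermitian matrices, each commuting with ϱ, converging in operator norm to ϱ. Then ‖p·ϱ_m⁻¹ − ϱ⁺‖ → 0, and consequently for every a ∈ M_d(ℂ) the matrices ϱ_m·(a·p)·ϱ_m⁻¹ converge in norm to ϱ·(a·p)·ϱ⁺. -/
import Mathlib


open Matrix
open scoped ComplexOrder

/-- The ℓ²-operator norm of a matrix. -/
noncomputable def l2opNorm {d : ℕ} (a : Matrix (Fin d) (Fin d) ℂ) : ℝ :=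
  ‖Matrix.toEuclideanCLM (𝕜 := ℂ) a‖

lemma l2_nonneg {d : ℕ} (a : Matrix (Fin d) (Fin d) ℂ) : 0 ≤ l2opNorm a :=
  norm_nonneg _

lemma l2_mul_le {d : ℕ} (a b : Matrix (Fin d) (Fin d) ℂ) :
    l2opNorm (a * b) ≤ l2opNorm a * l2opNorm b := by
  unfold l2opNorm
  rw [_root_.map_mul]
  exact norm_mul_le _ _

lemma l2_add_le {d : ℕ} (a b : Matrix (Fin d) (Fin d) ℂ) :
    l2opNorm (a + b) ≤ l2opNorm a + l2opNorm b := by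
  unfold l2opNorm
  rw [map_add]
  exact norm_add_le _ _

lemma l2_sub_comm {d : ℕ} (a b : Matrix (Fin d) (Fin d) ℂ) :
    l2opNorm (a - b) = l2opNorm (b - a) := by
  unfold l2opNorm
  rw [show a - b = -(b - a) from (neg_sub b a).symm, map_neg, norm_neg]

lemma l2_le_sub_add {d : ℕ} (a b : Matrix (Fin d) (Fin d) ℂ) :
    l2opNorm a ≤ l2opNorm (a - b) + l2opNorm b := by
  unfold l2opNorm
  calc ‖Matrix.toEuclideanCLM (𝕜 := ℂ) a‖
      = ‖Matrix.toEuclideanCLM (𝕜 := ℂ) (a - b) + Matrix.toEuclideanCLM (𝕜 := ℂ) b‖ := by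
        rw [← map_add, sub_add_cancel]
    _ ≤ _ := norm_add_le _ _

/-- let `ϱ` be positive semidefinite with support projection `p` and
Moore–Penrose pseudoinverse `ϱ⁺` (characterized by the Penrose conditions, with
`ϱ·ϱ⁺ = ϱ⁺·ϱ = p` and `p` Hermitian).  If positive definite matrices `ϱ_m`, each commuting
with `ϱ`, converge in operator norm to `ϱ`, then `‖p·ϱ_m⁻¹ − ϱ⁺‖ → 0`, and consequently for
every `a` the matrices `ϱ_m·(a·p)·ϱ_m⁻¹` converge in norm to `ϱ·(a·p)·ϱ⁺`. -/
theorem stmt3 (d : ℕ) (hd : 1 ≤ d)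
    (ϱ p ϱplus : Matrix (Fin d) (Fin d) ℂ)
    (hϱ : ϱ.PosSemidef)
    (hmp1 : ϱ * ϱplus * ϱ = ϱ) (hmp2 : ϱplus * ϱ * ϱplus = ϱplus)
    (hmp3 : ϱ * ϱplus = p) (hmp4 : ϱplus * ϱ = p) (hpherm : pᴴ = p)
    (ϱseq : ℕ → Matrix (Fin d) (Fin d) ℂ)
    (hpos : ∀ m, (ϱseq m).PosDef)
    (hcomm : ∀ m, ϱseq m * ϱ = ϱ * ϱseq m)
    (hconv : Filter.Tendsto (fun m => l2opNorm (ϱseq m - ϱ)) Filter.atTop (nhds 0)) :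
    Filter.Tendsto (fun m => l2opNorm (p * (ϱseq m)⁻¹ - ϱplus)) Filter.atTop (nhds 0) ∧
    ∀ a : Matrix (Fin d) (Fin d) ℂ,
      Filter.Tendsto (fun m => l2opNorm (ϱseq m * (a * p) * (ϱseq m)⁻¹ - ϱ * (a * p) * ϱplus))
        Filter.atTop (nhds 0) := by
  -- basic algebraic identities
  have hpϱ : p * ϱ = ϱ := by rw [← hmp3]; exact hmp1
  have hϱp : ϱ * p = ϱ := by rw [← hmp4, ← mul_assoc]; exact hmp1
  have hpplus : p * ϱplus = ϱplus := by rw [← hmp4]; exact hmp2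
  have hplusp : ϱplus * p = ϱplus := by rw [← hmp3, ← mul_assoc]; exact hmp2
  have hp2 : p * p = p := by
    calc p * p = ϱ * ϱplus * p := by rw [hmp3]
      _ = ϱ * (ϱplus * p) := mul_assoc _ _ _
      _ = ϱ * ϱplus := by rw [hplusp]
      _ = p := hmp3
  -- p commutes with each ϱseq m
  have hpx : ∀ m, p * ϱseq m = ϱseq m * p := by
    intro m
    have hx : ϱseq m * ϱ = ϱ * ϱseq m := hcomm m
    have key : ϱ * (ϱseq m * p) = ϱ * ϱseq m := by
      calc ϱ * (ϱseq m * p) = ϱ * ϱseq m * p := (mul_assoc _ _ _).symm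
        _ = ϱseq m * ϱ * p := by rw [hx]
        _ = ϱseq m * (ϱ * p) := mul_assoc _ _ _
        _ = ϱseq m * ϱ := by rw [hϱp]
        _ = ϱ * ϱseq m := hx
    have key2 : p * ϱseq m * ϱ = ϱseq m * ϱ := by
      calc p * ϱseq m * ϱ = p * (ϱseq m * ϱ) := mul_assoc _ _ _
        _ = p * (ϱ * ϱseq m) := by rw [hx]
        _ = p * ϱ * ϱseq m := (mul_assoc _ _ _).symm
        _ = ϱ * ϱseq m := by rw [hpϱ]
        _ = ϱseq m * ϱ := hx.symm
    have h1 : p * (ϱseq m * p) = p * ϱseq m := by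
      calc p * (ϱseq m * p) = ϱplus * ϱ * (ϱseq m * p) := by rw [hmp4]
        _ = ϱplus * (ϱ * (ϱseq m * p)) := mul_assoc _ _ _
        _ = ϱplus * (ϱ * ϱseq m) := by rw [key]
        _ = ϱplus * ϱ * ϱseq m := (mul_assoc _ _ _).symm
        _ = p * ϱseq m := by rw [hmp4]
    have h2 : p * ϱseq m * p = ϱseq m * p := by
      calc p * ϱseq m * p = p * ϱseq m * (ϱ * ϱplus) := by rw [hmp3]
        _ = p * ϱseq m * ϱ * ϱplus := (mul_assoc _ _ _).symm
        _ = ϱseq m * ϱ * ϱplus := by rw [key2]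
        _ = ϱseq m * (ϱ * ϱplus) := mul_assoc _ _ _
        _ = ϱseq m * p := by rw [hmp3]
    calc p * ϱseq m = p * (ϱseq m * p) := by rw [h1]
      _ = p * ϱseq m * p := (mul_assoc _ _ _).symm
      _ = ϱseq m * p := h2
  have hinv : ∀ m, ϱseq m * (ϱseq m)⁻¹ = 1 := fun m =>
    Matrix.mul_nonsing_inv _ (hpos m).det_pos.ne'.isUnit
  -- the key identity
  have hid : ∀ m, p * (ϱseq m)⁻¹ - ϱplus
      = ϱplus * (ϱ - ϱseq m) * (p * (ϱseq m)⁻¹) := by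
    intro m
    have t1 : ϱplus * ϱ * (p * (ϱseq m)⁻¹) = p * (ϱseq m)⁻¹ := by
      rw [hmp4, ← mul_assoc, hp2]
    have t2 : ϱplus * ϱseq m * (p * (ϱseq m)⁻¹) = ϱplus := by
      calc ϱplus * ϱseq m * (p * (ϱseq m)⁻¹)
          = ϱplus * (ϱseq m * p * (ϱseq m)⁻¹) := by
            rw [mul_assoc ϱplus, ← mul_assoc (ϱseq m)]
        _ = ϱplus * (p * ϱseq m * (ϱseq m)⁻¹) := by rw [hpx]
        _ = ϱplus * (p * (ϱseq m * (ϱseq m)⁻¹)) := by rw [mul_assoc p]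
        _ = ϱplus * (p * 1) := by rw [hinv]
        _ = ϱplus * p := by rw [mul_one]
        _ = ϱplus := hplusp
    calc p * (ϱseq m)⁻¹ - ϱplus
        = ϱplus * ϱ * (p * (ϱseq m)⁻¹) - ϱplus * ϱseq m * (p * (ϱseq m)⁻¹) := by
          rw [t1, t2]
      _ = ϱplus * (ϱ - ϱseq m) * (p * (ϱseq m)⁻¹) := by noncomm_ring
  -- notation for norms
  have hK0 : 0 ≤ l2opNorm ϱplus := l2_nonneg ϱplus
  have hbound : ∀ m, l2opNorm (p * (ϱseq m)⁻¹ - ϱplus)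
      ≤ l2opNorm ϱplus * l2opNorm (ϱseq m - ϱ)
        * (l2opNorm (p * (ϱseq m)⁻¹ - ϱplus) + l2opNorm ϱplus) := by
    intro m
    have hB : l2opNorm (p * (ϱseq m)⁻¹)
        ≤ l2opNorm (p * (ϱseq m)⁻¹ - ϱplus) + l2opNorm ϱplus :=
      l2_le_sub_add (p * (ϱseq m)⁻¹) ϱplus
    calc l2opNorm (p * (ϱseq m)⁻¹ - ϱplus)
        = l2opNorm (ϱplus * (ϱ - ϱseq m) * (p * (ϱseq m)⁻¹)) := by rw [hid m]
      _ ≤ l2opNorm (ϱplus * (ϱ - ϱseq m)) * l2opNorm (p * (ϱseq m)⁻¹) := l2_mul_le _ _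
      _ ≤ l2opNorm ϱplus * l2opNorm (ϱseq m - ϱ)
          * (l2opNorm (p * (ϱseq m)⁻¹ - ϱplus) + l2opNorm ϱplus) := by
          apply mul_le_mul _ hB (l2_nonneg _) (mul_nonneg hK0 (l2_nonneg _))
          calc l2opNorm (ϱplus * (ϱ - ϱseq m))
              ≤ l2opNorm ϱplus * l2opNorm (ϱ - ϱseq m) := l2_mul_le _ _
            _ = l2opNorm ϱplus * l2opNorm (ϱseq m - ϱ) := by rw [l2_sub_comm]
  -- eventually, e m ≤ 2 K^2 h m
  have hev : ∀ᶠ m in Filter.atTop,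
      l2opNorm (p * (ϱseq m)⁻¹ - ϱplus)
        ≤ 2 * l2opNorm ϱplus ^ 2 * l2opNorm (ϱseq m - ϱ) := by
    have hδ : (0 : ℝ) < 1 / (2 * (l2opNorm ϱplus + 1)) := by positivity
    filter_upwards [hconv.eventually (gt_mem_nhds hδ)] with m hm
    set K := l2opNorm ϱplus
    set e := l2opNorm (p * (ϱseq m)⁻¹ - ϱplus)
    set h := l2opNorm (ϱseq m - ϱ)
    have he0 : 0 ≤ e := l2_nonneg _
    have hh0 : 0 ≤ h := l2_nonneg _
    have hKh : K * h ≤ 1 / 2 := by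
      have h1 : K * h ≤ K * (1 / (2 * (K + 1))) :=
        mul_le_mul_of_nonneg_left (le_of_lt hm) hK0
      have h2 : K * (1 / (2 * (K + 1))) ≤ 1 / 2 := by
        rw [mul_one_div,
          div_le_div_iff₀ (by positivity : (0:ℝ) < 2 * (K + 1)) (by norm_num : (0:ℝ) < 2)]
        nlinarith
      linarith
    have h1 := hbound m
    have heK : e ≤ K := by nlinarith
    nlinarith
  have htend1 : Filter.Tendsto (fun m => l2opNorm (p * (ϱseq m)⁻¹ - ϱplus))
      Filter.atTop (nhds 0) := by
    apply squeeze_zero' (Filter.Eventually.of_forall fun m => l2_nonneg _) hev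
    have := hconv.const_mul (2 * l2opNorm ϱplus ^ 2)
    simpa using this
  refine ⟨htend1, ?_⟩
  -- second part
  intro a
  have hid2 : ∀ m, ϱseq m * (a * p) * (ϱseq m)⁻¹ - ϱ * (a * p) * ϱplus
      = (ϱseq m - ϱ) * a * (p * (ϱseq m)⁻¹) + ϱ * a * (p * (ϱseq m)⁻¹ - ϱplus) := by
    intro m
    have t2 : ϱ * (a * p) * ϱplus = ϱ * a * ϱplus := by
      rw [← mul_assoc ϱ a p, mul_assoc (ϱ * a) p ϱplus, hpplus]
    rw [t2]
    noncomm_ring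
  have hbound2 : ∀ m, l2opNorm (ϱseq m * (a * p) * (ϱseq m)⁻¹ - ϱ * (a * p) * ϱplus)
      ≤ l2opNorm (ϱseq m - ϱ) * l2opNorm a
          * (l2opNorm (p * (ϱseq m)⁻¹ - ϱplus) + l2opNorm ϱplus)
        + l2opNorm ϱ * l2opNorm a * l2opNorm (p * (ϱseq m)⁻¹ - ϱplus) := by
    intro m
    rw [hid2 m]
    have hB : l2opNorm (p * (ϱseq m)⁻¹)
        ≤ l2opNorm (p * (ϱseq m)⁻¹ - ϱplus) + l2opNorm ϱplus :=
      l2_le_sub_add (p * (ϱseq m)⁻¹) ϱplus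
    calc l2opNorm ((ϱseq m - ϱ) * a * (p * (ϱseq m)⁻¹) + ϱ * a * (p * (ϱseq m)⁻¹ - ϱplus))
        ≤ l2opNorm ((ϱseq m - ϱ) * a * (p * (ϱseq m)⁻¹))
          + l2opNorm (ϱ * a * (p * (ϱseq m)⁻¹ - ϱplus)) := l2_add_le _ _
      _ ≤ _ := by
          apply add_le_add
          · calc l2opNorm ((ϱseq m - ϱ) * a * (p * (ϱseq m)⁻¹))
                ≤ l2opNorm ((ϱseq m - ϱ) * a) * l2opNorm (p * (ϱseq m)⁻¹) := l2_mul_le _ _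
              _ ≤ l2opNorm (ϱseq m - ϱ) * l2opNorm a
                  * (l2opNorm (p * (ϱseq m)⁻¹ - ϱplus) + l2opNorm ϱplus) := by
                  apply mul_le_mul (l2_mul_le _ _) hB (l2_nonneg _)
                  exact mul_nonneg (l2_nonneg _) (l2_nonneg _)
          · calc l2opNorm (ϱ * a * (p * (ϱseq m)⁻¹ - ϱplus))
                ≤ l2opNorm (ϱ * a) * l2opNorm (p * (ϱseq m)⁻¹ - ϱplus) := l2_mul_le _ _
              _ ≤ l2opNorm ϱ * l2opNorm a * l2opNorm (p * (ϱseq m)⁻¹ - ϱplus) :=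
                  mul_le_mul_of_nonneg_right (l2_mul_le _ _) (l2_nonneg _)
  apply squeeze_zero' (Filter.Eventually.of_forall fun m => l2_nonneg _)
    (Filter.Eventually.of_forall hbound2)
  have h1 : Filter.Tendsto
      (fun m => l2opNorm (ϱseq m - ϱ) * l2opNorm a
        * (l2opNorm (p * (ϱseq m)⁻¹ - ϱplus) + l2opNorm ϱplus))
      Filter.atTop (nhds 0) := by
    have := (hconv.mul_const (l2opNorm a)).mul (htend1.add_const (l2opNorm ϱplus))
    simpa using this
  have h2 : Filter.Tendsto
      (fun m => l2opNorm ϱ * l2opNorm a * l2opNorm (p * (ϱseq m)⁻¹ - ϱplus))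
      Filter.atTop (nhds 0) := by
    have := htend1.const_mul (l2opNorm ϱ * l2opNorm a)
    simpa using this
  simpa using h1.add h2
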